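/- Every cycle of length 6 in the crossing graph of K6 can be obtained, by applying a rotation x ↦ x+k (mod 6) or reflection x ↦ c−x (mod 6) of the vertex labels together with a cyclic rotation or reversal of the sequence, from one of the following three cyclic sequences of interior edges (ab denoting {a,b}): (13,24,35,14,36,25), (13,24,35,46,15,26), (13,24,36,15,46,25). -/

import Mathlib

/-- The cyclic length of the chord joining vertices `a` and `b` of `K₆`,
whose vertices are labeled by `ZMod 6` in cyclic order around a circle. -/
def cycLen (a b : ZMod 6) : ℕ := min (b - a).val (a - b).val

/-- An interior edge of `K₆`: a 2-element set of vertices at cyclic distance at least 2. -/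
def InteriorEdge (e : Finset (ZMod 6)) : Prop :=
  e.card = 2 ∧ ∀ a ∈ e, ∀ b ∈ e, a ≠ b → 2 ≤ cycLen a b

/-- A short edge of `K₆`: a 2-element set of vertices at cyclic distance exactly 2. -/
def ShortEdge (e : Finset (ZMod 6)) : Prop :=
  e.card = 2 ∧ ∀ a ∈ e, ∀ b ∈ e, a ≠ b → cycLen a b = 2

/-- A long edge of `K₆`: a 2-element set of vertices at cyclic distance exactly 3. -/
def LongEdge (e : Finset (ZMod 6)) : Prop :=
  e.card = 2 ∧ ∀ a ∈ e, ∀ b ∈ e, a ≠ b → cycLen a b = 3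

/-- `x` lies in the open cyclic arc from `a` to `b` (in the cyclic order of labels). -/
def InArc (a b x : ZMod 6) : Prop := 0 < (x - a).val ∧ (x - a).val < (b - a).val

/-- Two chords `{a,b}` and `{c,d}` cross iff their endpoint sets are disjoint and
exactly one of `c`, `d` lies in the open cyclic arc from `a` to `b`. -/
def Crosses (e f : Finset (ZMod 6)) : Prop :=
  Disjoint e f ∧ ∃ a b c d : ZMod 6, a ≠ b ∧ c ≠ d ∧ e = {a, b} ∧ f = {c, d} ∧
    Xor' (InArc a b c) (InArc a b d)

def e13 : Finset (ZMod 6) := {1, 3}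
def e15 : Finset (ZMod 6) := {1, 5}
def e24 : Finset (ZMod 6) := {2, 4}
def e26 : Finset (ZMod 6) := {2, 6}
def e35 : Finset (ZMod 6) := {3, 5}
def e46 : Finset (ZMod 6) := {4, 6}
def e14 : Finset (ZMod 6) := {1, 4}
def e25 : Finset (ZMod 6) := {2, 5}
def e36 : Finset (ZMod 6) := {3, 6}

/-- A symmetry of the vertex labels: a rotation `x ↦ x + k` or a reflection
`x ↦ k - x` of `ZMod 6`. -/
def DihedralMap (φ : ZMod 6 → ZMod 6) : Prop :=
  (∃ k : ZMod 6, ∀ x, φ x = x + k) ∨ (∃ k : ZMod 6, ∀ x, φ x = k - x)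

/-- A symmetry of a cyclic sequence of length `s`: a cyclic rotation `i ↦ i + t`
or a reversal `i ↦ t - i` of the index set `ZMod s`. -/
def SeqSym {s : ℕ} (ψ : ZMod s → ZMod s) : Prop :=
  (∃ t : ZMod s, ∀ i, ψ i = i + t) ∨ (∃ t : ZMod s, ∀ i, ψ i = t - i)

/-- A cycle of length `s` in the crossing graph of `K₆`: a cyclic sequence of `s`
distinct interior edges, each crossing the next (cyclically). -/
def IsCycle {s : ℕ} (c : ZMod s → Finset (ZMod 6)) : Prop :=
  Function.Injective c ∧ (∀ i, InteriorEdge (c i)) ∧ (∀ i, Crosses (c i) (c (i + 1)))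

/-- `d` is obtained from `c` by applying a rotation or reflection of the vertex labels
together with a cyclic rotation or reversal of the sequence. -/
def ObtainedFrom {s : ℕ} (c d : ZMod s → Finset (ZMod 6)) : Prop :=
  ∃ (φ : ZMod 6 → ZMod 6) (ψ : ZMod s → ZMod s),
    DihedralMap φ ∧ SeqSym ψ ∧ ∀ i, d i = (c (ψ i)).image φ

def cyc6a : ZMod 6 → Finset (ZMod 6) := fun i => [e13, e24, e35, e14, e36, e25].getD i.val ∅
def cyc6b : ZMod 6 → Finset (ZMod 6) := fun i => [e13, e24, e35, e46, e15, e26].getD i.val ∅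
def cyc6c : ZMod 6 → Finset (ZMod 6) := fun i => [e13, e24, e36, e15, e46, e25].getD i.val ∅

instance (e : Finset (ZMod 6)) : Decidable (InteriorEdge e) := by
  unfold InteriorEdge; infer_instance
instance (a b x : ZMod 6) : Decidable (InArc a b x) := by
  unfold InArc; infer_instance
instance (e f : Finset (ZMod 6)) : Decidable (Crosses e f) := by
  unfold Crosses Xor'; infer_instance

/-- The nine interior edges. -/
def arr : Fin 9 → Finset (ZMod 6) := ![e13,e15,e24,e26,e35,e46,e14,e25,e36]

/-- Crossing table for the nine interior edges. -/
def cB : Fin 9 → Fin 9 → Bool :=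
  ![![false, false, true, true, false, false, false, true, false],
  ![false, false, false, true, false, true, false, false, true],
  ![true, false, false, false, true, false, false, false, true],
  ![true, true, false, false, false, false, true, false, false],
  ![false, false, true, false, false, true, true, false, false],
  ![false, true, false, false, true, false, false, true, false],
  ![false, false, false, true, true, false, false, true, true],
  ![true, false, false, false, false, true, true, false, true],
  ![false, true, true, false, false, false, true, true, false]]

theorem interiorRep : ∀ e : Finset (ZMod 6), InteriorEdge e → ∃ j : Fin 9, e = arr j := by
  decide

theorem arrInj : ∀ a b : Fin 9, arr a = arr b → a = b := by decide

theorem crossTo : ∀ a b : Fin 9, Crosses (arr a) (arr b) → cB a b = true := by decide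

def φD (b : Bool) (k : ZMod 6) : ZMod 6 → ZMod 6 := fun x => if b then x + k else k - x
def ψD (b : Bool) (t : ZMod 6) : ZMod 6 → ZMod 6 := fun i => if b then i + t else t - i

def MatchC (cyc : ZMod 6 → Finset (ZMod 6)) (j0 j1 j2 j3 j4 j5 : Fin 9) : Prop :=
  ∃ (b b2 : Bool) (k t : ZMod 6), ∀ i : ZMod 6,
    arr ([j0,j1,j2,j3,j4,j5].getD i.val 0) = (cyc (ψD b2 t i)).image (φD b k)

instance (cyc j0 j1 j2 j3 j4 j5) : Decidable (MatchC cyc j0 j1 j2 j3 j4 j5) := by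
  unfold MatchC; infer_instance

set_option maxHeartbeats 4000000 in
theorem keyLemma : ∀ j0 j1 : Fin 9, cB j0 j1 = true →
  ∀ j2 : Fin 9, (cB j1 j2 = true ∧ j2 ≠ j0) →
  ∀ j3 : Fin 9, (cB j2 j3 = true ∧ j3 ≠ j0 ∧ j3 ≠ j1) →
  ∀ j4 : Fin 9, (cB j3 j4 = true ∧ j4 ≠ j0 ∧ j4 ≠ j1 ∧ j4 ≠ j2) →
  ∀ j5 : Fin 9, (cB j4 j5 = true ∧ cB j5 j0 = true ∧ j5 ≠ j1 ∧ j5 ≠ j2 ∧ j5 ≠ j3) →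
  MatchC cyc6a j0 j1 j2 j3 j4 j5 ∨ MatchC cyc6b j0 j1 j2 j3 j4 j5 ∨
    MatchC cyc6c j0 j1 j2 j3 j4 j5 := by
  decide

theorem finishLemma (c cyc : ZMod 6 → Finset (ZMod 6)) (j0 j1 j2 j3 j4 j5 : Fin 9)
    (h0 : c 0 = arr j0) (h1 : c 1 = arr j1) (h2 : c 2 = arr j2) (h3 : c 3 = arr j3)
    (h4 : c 4 = arr j4) (h5 : c 5 = arr j5)
    (hM : MatchC cyc j0 j1 j2 j3 j4 j5) : ObtainedFrom cyc c := by
  obtain ⟨b, b2, k, t, hM⟩ := hM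
  have hrep : ∀ i : ZMod 6, c i = arr ([j0,j1,j2,j3,j4,j5].getD i.val 0) := by
    intro i
    fin_cases i
    · exact h0
    · exact h1
    · exact h2
    · exact h3
    · exact h4
    · exact h5
  refine ⟨φD b k, ψD b2 t, ?_, ?_, fun i => (hrep i).trans (hM i)⟩
  · cases b
    · exact Or.inr ⟨k, fun x => rfl⟩
    · exact Or.inl ⟨k, fun x => rfl⟩
  · cases b2
    · exact Or.inr ⟨t, fun x => rfl⟩
    · exact Or.inl ⟨t, fun x => rfl⟩

/-- Every cycle of length 6 in the crossing graph of `K₆` is obtained, via a rotation or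
reflection of the vertex labels together with a cyclic rotation or reversal of the
sequence, from one of `(13,24,35,14,36,25)`, `(13,24,35,46,15,26)`,
`(13,24,36,15,46,25)`. -/
theorem stmt_16 :
    ∀ c : ZMod 6 → Finset (ZMod 6), IsCycle c →
      ObtainedFrom cyc6a c ∨ ObtainedFrom cyc6b c ∨ ObtainedFrom cyc6c c := by
  intro c hc
  obtain ⟨hinj, hint, hcr⟩ := hc
  obtain ⟨j0, h0⟩ := interiorRep _ (hint 0)
  obtain ⟨j1, h1⟩ := interiorRep _ (hint 1)
  obtain ⟨j2, h2⟩ := interiorRep _ (hint 2)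
  obtain ⟨j3, h3⟩ := interiorRep _ (hint 3)
  obtain ⟨j4, h4⟩ := interiorRep _ (hint 4)
  obtain ⟨j5, h5⟩ := interiorRep _ (hint 5)
  have x01 : cB j0 j1 = true := crossTo _ _ (by
    have := hcr 0
    rw [show ((0:ZMod 6)+1) = 1 from by decide, h0, h1] at this
    exact this)
  have x12 : cB j1 j2 = true := crossTo _ _ (by
    have := hcr 1
    rw [show ((1:ZMod 6)+1) = 2 from by decide, h1, h2] at this
    exact this)
  have x23 : cB j2 j3 = true := crossTo _ _ (by
    have := hcr 2
    rw [show ((2:ZMod 6)+1) = 3 from by decide, h2, h3] at this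
    exact this)
  have x34 : cB j3 j4 = true := crossTo _ _ (by
    have := hcr 3
    rw [show ((3:ZMod 6)+1) = 4 from by decide, h3, h4] at this
    exact this)
  have x45 : cB j4 j5 = true := crossTo _ _ (by
    have := hcr 4
    rw [show ((4:ZMod 6)+1) = 5 from by decide, h4, h5] at this
    exact this)
  have x50 : cB j5 j0 = true := crossTo _ _ (by
    have := hcr 5
    rw [show ((5:ZMod 6)+1) = 0 from by decide, h5, h0] at this
    exact this)
  have ne : ∀ (a b : ZMod 6) (ja jb : Fin 9), a ≠ b → c a = arr ja → c b = arr jb →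
      ja ≠ jb := by
    intro a b ja jb hab ha hb h
    exact hab (hinj (by rw [ha, hb, h]))
  have d20 := ne 2 0 j2 j0 (by decide) h2 h0
  have d30 := ne 3 0 j3 j0 (by decide) h3 h0
  have d31 := ne 3 1 j3 j1 (by decide) h3 h1
  have d40 := ne 4 0 j4 j0 (by decide) h4 h0
  have d41 := ne 4 1 j4 j1 (by decide) h4 h1
  have d42 := ne 4 2 j4 j2 (by decide) h4 h2
  have d51 := ne 5 1 j5 j1 (by decide) h5 h1
  have d52 := ne 5 2 j5 j2 (by decide) h5 h2
  have d53 := ne 5 3 j5 j3 (by decide) h5 h3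
  rcases keyLemma j0 j1 x01 j2 ⟨x12, d20⟩ j3 ⟨x23, d30, d31⟩ j4 ⟨x34, d40, d41, d42⟩
      j5 ⟨x45, x50, d51, d52, d53⟩ with hM | hM | hM
  · exact Or.inl (finishLemma c cyc6a j0 j1 j2 j3 j4 j5 h0 h1 h2 h3 h4 h5 hM)
  · exact Or.inr (Or.inl (finishLemma c cyc6b j0 j1 j2 j3 j4 j5 h0 h1 h2 h3 h4 h5 hM))
  · exact Or.inr (Or.inr (finishLemma c cyc6c j0 j1 j2 j3 j4 j5 h0 h1 h2 h3 h4 h5 hM))
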